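/- For every R with 0 < R < √(3/(8π)) such that (1/(1−(8π/3)R²))^{1/4} < 3/2, the function ρ̃ : [0,R] → ℝ defined by ρ̃(r) = (A(r) − 1)/(3 − 2A(r)), where A(r) = ((1−(8π/3)r²)/(1−(8π/3)R²))^{1/4}, satisfies ρ̃(R) = 0, ρ̃(r) ≥ 0 on [0,R], and solves the ordinary differential equation dρ̃/dr = −((1+2ρ̃(r))/(1−(8π/3)r²))·4πr·(ρ̃(r) + 1/3) for all r ∈ (0,R). -/

import Mathlib

open Real Set

noncomputable section

/-- `A(r) = ((1−(8π/3)r²)/(1−(8π/3)R²))^{1/4}`. -/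
def Afun (R r : ℝ) : ℝ :=
  ((1 - 8 * π / 3 * r ^ 2) / (1 - 8 * π / 3 * R ^ 2)) ^ ((1:ℝ) / 4)

/-- `ρ̃(r) = (A(r) − 1)/(3 − 2A(r))`. -/
def rhoTilde (R r : ℝ) : ℝ := (Afun R r - 1) / (3 - 2 * Afun R r)

/-- The explicit function `ρ̃` solves the approximate TOV equation
`dρ̃/dr = −((1+2ρ̃)/(1−(8π/3)r²))·4πr·(ρ̃ + 1/3)` with `ρ̃(R) = 0` and `ρ̃ ≥ 0`. -/
theorem stmt4 (R : ℝ) (hR : 0 < R) (hR2 : R < Real.sqrt (3 / (8 * π)))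
    (hcond : (1 / (1 - 8 * π / 3 * R ^ 2)) ^ ((1:ℝ) / 4) < 3 / 2) :
    rhoTilde R R = 0 ∧
    (∀ r ∈ Icc (0:ℝ) R, 0 ≤ rhoTilde R r) ∧
    ∀ r ∈ Ioo (0:ℝ) R,
      HasDerivAt (rhoTilde R)
        (-((1 + 2 * rhoTilde R r) / (1 - 8 * π / 3 * r ^ 2)) * (4 * π * r) *
          (rhoTilde R r + 1 / 3)) r := by
  have hπ : 0 < π := Real.pi_pos
  have hRsq : R ^ 2 < 3 / (8 * π) := (Real.lt_sqrt hR.le).mp hR2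
  have hRsq' : 8 * π / 3 * R ^ 2 < 1 := by
    rw [lt_div_iff₀ (by positivity)] at hRsq; nlinarith
  have hc : 0 < 1 - 8 * π / 3 * R ^ 2 := by linarith
  set c : ℝ := 1 - 8 * π / 3 * R ^ 2 with hcdef
  -- positivity of u on [0,R]
  have hu : ∀ r ∈ Icc (0:ℝ) R, 0 < 1 - 8 * π / 3 * r ^ 2 := by
    intro r hr
    have h1 : r ^ 2 ≤ R ^ 2 := pow_le_pow_left₀ hr.1 hr.2 2
    nlinarith
  have hAge : ∀ r ∈ Icc (0:ℝ) R, 1 ≤ Afun R r := by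
    intro r hr
    have h1 : r ^ 2 ≤ R ^ 2 := pow_le_pow_left₀ hr.1 hr.2 2
    have hb : (1:ℝ) ≤ (1 - 8 * π / 3 * r ^ 2) / c := by
      rw [le_div_iff₀ hc]; nlinarith
    calc (1:ℝ) = 1 ^ ((1:ℝ)/4) := (Real.one_rpow _).symm
    _ ≤ _ := Real.rpow_le_rpow (by norm_num) hb (by norm_num)
  have hAlt : ∀ r ∈ Icc (0:ℝ) R, Afun R r < 3 / 2 := by
    intro r hr
    have h2 : (1 - 8 * π / 3 * r ^ 2) / c ≤ 1 / c := by
      apply (div_le_div_iff_of_pos_right hc).mpr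
      nlinarith [sq_nonneg r, hr.1]
    calc Afun R r ≤ (1 / c) ^ ((1:ℝ)/4) :=
          Real.rpow_le_rpow (div_nonneg (hu r hr).le hc.le) h2 (by norm_num)
    _ < 3 / 2 := hcond
  have hAR : Afun R R = 1 := by
    rw [Afun, ← hcdef, div_self hc.ne', Real.one_rpow]
  refine ⟨by rw [rhoTilde, hAR]; norm_num, ?_, ?_⟩
  · intro r hr
    have h1 := hAge r hr
    have h2 := hAlt r hr
    exact div_nonneg (by linarith) (by linarith)
  · intro r hr
    have hrI : r ∈ Icc (0:ℝ) R := ⟨hr.1.le, hr.2.le⟩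
    have hur := hu r hrI
    have h1 := hAge r hrI
    have h2 := hAlt r hrI
    have hden : 3 - 2 * Afun R r ≠ 0 := by linarith
    set u : ℝ := 1 - 8 * π / 3 * r ^ 2 with hudef
    have hbpos : 0 < u / c := div_pos hur hc
    -- derivative of the base
    have hb : HasDerivAt (fun x : ℝ => (1 - 8 * π / 3 * x ^ 2) / c)
        (-(8 * π / 3 * (2 * r)) / c) r := by
      have h := (((hasDerivAt_pow 2 r).const_mul (8 * π / 3)).const_sub 1).div_const c
      refine h.congr_deriv ?_
      push_cast
      ring
    have hA : HasDerivAt (Afun R)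
        (-(8 * π / 3 * (2 * r)) / c * ((1:ℝ)/4) * (u / c) ^ ((1:ℝ)/4 - 1)) r := by
      have := hb.rpow_const (p := (1:ℝ)/4) (Or.inl hbpos.ne')
      exact this
    have hApow : (u / c) ^ ((1:ℝ)/4 - 1) = Afun R r / (u / c) := by
      rw [Real.rpow_sub hbpos, Real.rpow_one]
      rfl
    have hρ : HasDerivAt (rhoTilde R)
        ((-(8 * π / 3 * (2 * r)) / c * ((1:ℝ)/4) * (u / c) ^ ((1:ℝ)/4 - 1) * (3 - 2 * Afun R r)
          - (Afun R r - 1) * (0 - 2 * (-(8 * π / 3 * (2 * r)) / c * ((1:ℝ)/4) * (u / c) ^ ((1:ℝ)/4 - 1))))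
          / (3 - 2 * Afun R r) ^ 2) r := by
      exact (hA.sub_const 1).div ((hasDerivAt_const r 3).sub (hA.const_mul 2)) hden
    convert hρ using 1
    rw [hApow, rhoTilde]
    set a := Afun R r
    field_simp
    ring
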